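/- The map ∗ on Conf_n(P^{m-1}) defined by [l_1,...,l_n] ↦ [h_{[1,m-1]}, h_{[n,m-2]}, ..., h_{[2,m]}] (i.e. the i-th output is the dual point of the hyperplane spanned by l_{2-i},...,l_{m-i}, indices mod n) is an involution on generic configurations: ∗∘∗ = id. -/

import Mathlib

open Module Submodule

/-- The sup of `r` consecutive lines starting at `a` (indices mod `n`). -/
noncomputable def win (m n : ℕ) (l : ZMod n → Submodule ℂ (Fin m → ℂ))
    (a : ZMod n) (r : ℕ) : Submodule ℂ (Fin m → ℂ) :=
  ⨆ j : Fin r, l (a + ((j : ℕ) : ZMod n))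

lemma le_win (m n : ℕ) (l : ZMod n → Submodule ℂ (Fin m → ℂ)) (a : ZMod n)
    {k r : ℕ} (hk : k < r) : l (a + (k : ZMod n)) ≤ win m n l a r :=
  le_iSup (fun j : Fin r => l (a + ((j : ℕ) : ZMod n))) ⟨k, hk⟩

lemma win_le_win (m n : ℕ) (l : ZMod n → Submodule ℂ (Fin m → ℂ)) (a : ZMod n)
    {k s r : ℕ} (h : k + s ≤ r) : win m n l (a + (k : ZMod n)) s ≤ win m n l a r := by
  refine iSup_le fun j => ?_
  have hj : k + (j : ℕ) < r := lt_of_lt_of_le (by omega) h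
  have h2 := le_win m n l a hj
  have h3 : a + ((k + (j : ℕ) : ℕ) : ZMod n)
      = a + (k : ZMod n) + (((j : ℕ) : ℕ) : ZMod n) := by push_cast; ring
  rw [h3] at h2
  exact h2

lemma win_succ (m n : ℕ) (l : ZMod n → Submodule ℂ (Fin m → ℂ)) (a : ZMod n) (r : ℕ) :
    win m n l a (r + 1) = win m n l a r ⊔ l (a + (r : ZMod n)) := by
  refine le_antisymm (iSup_le fun j => ?_) (sup_le ?_ ?_)
  · rcases lt_or_eq_of_le (Nat.lt_succ_iff.mp j.2) with h | h
    · exact le_trans (le_win m n l a h) le_sup_left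
    · rw [h]; exact le_sup_right
  · have h := win_le_win m n l a (k := 0) (s := r) (r := r + 1) (by omega)
    simpa using h
  · exact le_win m n l a (Nat.lt_succ_self r)

lemma finrank_win_le (m n : ℕ) (l : ZMod n → Submodule ℂ (Fin m → ℂ))
    (hdim : ∀ i, Module.finrank ℂ (l i) = 1) (a : ZMod n) (r : ℕ) :
    Module.finrank ℂ (win m n l a r) ≤ r := by
  induction r with
  | zero => rw [win, iSup_of_empty]; simp
  | succ r ih =>
    rw [win_succ]
    calc Module.finrank ℂ ((win m n l a r ⊔ l (a + (r : ZMod n))) : Submodule ℂ _)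
        ≤ Module.finrank ℂ (win m n l a r) + Module.finrank ℂ (l (a + (r : ZMod n))) := by
          have h := Submodule.finrank_sup_add_finrank_inf_eq (win m n l a r) (l (a + (r : ZMod n)))
          omega
      _ ≤ r + 1 := by rw [hdim]; omega

lemma win_split_le (m n : ℕ) (l : ZMod n → Submodule ℂ (Fin m → ℂ)) (a : ZMod n) (r s : ℕ) :
    win m n l a (r + s) ≤ win m n l a r ⊔ win m n l (a + (r : ZMod n)) s := by
  refine iSup_le fun j => ?_
  by_cases h : (j : ℕ) < r
  · exact le_trans (le_win m n l a h) le_sup_left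
  · have h2 : (j : ℕ) - r < s := by have := j.2; omega
    have h3 := le_win m n l (a + (r : ZMod n)) h2
    have h4 : a + (r : ZMod n) + ((((j : ℕ) - r : ℕ)) : ZMod n)
        = a + (((j : ℕ) : ℕ) : ZMod n) := by
      have h5 : ((j : ℕ) : ZMod n) = ((r + ((j : ℕ) - r) : ℕ) : ZMod n) := by
        congr 1; omega
      rw [h5]; push_cast; ring
    rw [h4] at h3
    exact le_trans h3 le_sup_right

lemma finrank_win (m n : ℕ) (l : ZMod n → Submodule ℂ (Fin m → ℂ))
    (hdim : ∀ i, Module.finrank ℂ (l i) = 1)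
    (hgen : ∀ i : ZMod n, (⨆ j : Fin m, l (i + ((j : ℕ) : ZMod n))) = ⊤)
    (a : ZMod n) {r : ℕ} (hr : r ≤ m) :
    Module.finrank ℂ (win m n l a r) = r := by
  refine le_antisymm (finrank_win_le m n l hdim a r) ?_
  have htop : win m n l a m = ⊤ := hgen a
  have hsplit := win_split_le m n l a r (m - r)
  rw [show r + (m - r) = m by omega, htop] at hsplit
  have h1 : Module.finrank ℂ (⊤ : Submodule ℂ (Fin m → ℂ)) = m := by
    rw [finrank_top]; exact Module.finrank_fin_fun ℂ
  have h2 : Module.finrank ℂ ((win m n l a r ⊔ win m n l (a + (r : ZMod n)) (m - r)) :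
      Submodule ℂ _) ≤ Module.finrank ℂ (win m n l a r) + (m - r) := by
    have h4 := Submodule.finrank_sup_add_finrank_inf_eq (win m n l a r)
      (win m n l (a + (r : ZMod n)) (m - r))
    have h5 := finrank_win_le m n l hdim (a + (r : ZMod n)) (m - r)
    omega
  have h3 := Submodule.finrank_mono hsplit
  omega

lemma iInf_fin_succ {α : Type*} [CompleteLattice α] {r : ℕ} (f : Fin (r + 1) → α) :
    ⨅ j : Fin (r + 1), f j = (⨅ j : Fin r, f (Fin.castSucc j)) ⊓ f (Fin.last r) := by
  refine le_antisymm (le_inf (le_iInf fun j => iInf_le _ _) (iInf_le _ _)) (le_iInf fun j => ?_)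
  induction j using Fin.lastCases with
  | last => exact inf_le_right
  | cast j' => exact le_trans inf_le_left (iInf_le _ j')

/-- Key computation: the intersection of the `m-1` windows of length `m-1` containing
index `i` is the line `l i`. -/
lemma key_inf (n p : ℕ) (l : ZMod n → Submodule ℂ (Fin (p + 2) → ℂ))
    (hdim : ∀ i, Module.finrank ℂ (l i) = 1)
    (hgen : ∀ i : ZMod n, (⨆ j : Fin (p + 2), l (i + ((j : ℕ) : ZMod n))) = ⊤)
    (i : ZMod n) :
    ∀ k, k ≤ p → (⨅ j : Fin (k + 1), win (p + 2) n l (i - ((j : ℕ) : ZMod n)) (p + 1)) =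
      win (p + 2) n l i (p + 1 - k) := by
  intro k
  induction k with
  | zero => intro _; simp
  | succ k ih =>
    intro hk
    have hk' : k ≤ p := by omega
    rw [iInf_fin_succ, show (⨅ j : Fin (k+1), win (p+2) n l
        (i - (((Fin.castSucc j : Fin (k+2)) : ℕ) : ZMod n)) (p + 1)) =
        ⨅ j : Fin (k+1), win (p+2) n l (i - ((j : ℕ) : ZMod n)) (p + 1) from rfl, ih hk',
      show p + 1 - (k + 1) = p - k from by omega]
    set A := win (p+2) n l i (p + 1 - k) with hA
    set B := win (p+2) n l (i - (((Fin.last (k+1) : Fin (k+2)) : ℕ) : ZMod n)) (p + 1) with hB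
    have hBdef : B = win (p+2) n l (i - (((k+1 : ℕ)) : ZMod n)) (p + 1) := rfl
    set C := win (p+2) n l i (p - k) with hC
    -- C ≤ A
    have hCA : C ≤ A := by
      have h := win_le_win (p+2) n l i (k := 0) (s := p - k) (r := p + 1 - k) (by omega)
      rw [Nat.cast_zero, add_zero] at h
      exact h
    -- C ≤ B
    have hCB : C ≤ B := by
      rw [hBdef]
      have h := win_le_win (p+2) n l (i - ((k+1 : ℕ) : ZMod n)) (k := k + 1)
        (s := p - k) (r := p + 1) (by omega)
      rwa [sub_add_cancel] at h
    -- A ⊔ B = ⊤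
    have htop : A ⊔ B = ⊤ := by
      refine top_le_iff.mp ?_
      have h1 : win (p+2) n l (i - ((k+1 : ℕ) : ZMod n)) (p+2) = ⊤ := hgen _
      have hs : win (p+2) n l (i - ((k+1 : ℕ) : ZMod n)) (p+2)
          = win (p+2) n l (i - ((k+1 : ℕ) : ZMod n)) (p+1)
            ⊔ l (i - ((k+1 : ℕ) : ZMod n) + ((p+1 : ℕ) : ZMod n)) :=
        win_succ (p+2) n l _ (p+1)
      rw [← h1, hs]
      refine sup_le (le_trans (le_of_eq hBdef.symm) le_sup_right) ?_
      have h2 : i - ((k+1 : ℕ) : ZMod n) + ((p+1 : ℕ) : ZMod n)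
          = i + ((p - k : ℕ) : ZMod n) := by
        have h3 : ((p + 1 : ℕ) : ZMod n) = (((k + 1) + (p - k) : ℕ) : ZMod n) := by
          congr 1; omega
        rw [h3]; push_cast; ring
      rw [h2]
      exact le_trans (le_win (p+2) n l i (by omega)) le_sup_left
    -- dimensions
    have hfA : Module.finrank ℂ A = p + 1 - k := finrank_win (p+2) n l hdim hgen i (by omega)
    have hfB : Module.finrank ℂ B = p + 1 := by
      rw [hBdef]; exact finrank_win (p+2) n l hdim hgen _ (by omega)
    have hfC : Module.finrank ℂ C = p - k := finrank_win (p+2) n l hdim hgen i (by omega)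
    have hftop : Module.finrank ℂ (⊤ : Submodule ℂ (Fin (p+2) → ℂ)) = p + 2 := by
      rw [finrank_top]; exact Module.finrank_fin_fun ℂ
    have hsum := Submodule.finrank_sup_add_finrank_inf_eq A B
    rw [htop, hftop] at hsum
    have hfAB : Module.finrank ℂ ((A ⊓ B) : Submodule ℂ _) = p - k := by omega
    exact (Submodule.eq_of_le_of_finrank_eq (le_inf hCA hCB) (by rw [hfC, hfAB])).symm

/-- The involution `∗` of `Conf_n(P^{m-1})` at the level of lines: the `i`-th entry of
`∗[l_1,…,l_n]` is the dual line `h_{[2-i, m-i]}`, the annihilator of the hyperplane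
spanned by the `m-1` consecutive lines `l_{2-i}, …, l_{m-i}` (indices mod `n`). -/
noncomputable def starMap (m n : ℕ) {W : Type} [AddCommGroup W] [Module ℂ W]
    (l : ZMod n → Submodule ℂ W) : ZMod n → Submodule ℂ (Module.Dual ℂ W) :=
  fun i =>
    Submodule.dualAnnihilator (⨆ j : Fin (m - 1), l (2 - i + ((j : ℕ) : ZMod n)))

/-- `∗ ∘ ∗ = id` on generic configurations (via the canonical identification of
`ℂ^m` with its double dual). -/
theorem stmt_2 (m n : ℕ) (hm : 1 < m) (hn : m + 1 < n)
    (l : ZMod n → Submodule ℂ (Fin m → ℂ))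
    (hdim : ∀ i, Module.finrank ℂ (l i) = 1)
    (hgen : ∀ i : ZMod n, (⨆ j : Fin m, l (i + ((j : ℕ) : ZMod n))) = ⊤) :
    ∀ i : ZMod n, starMap m n (starMap m n l) i =
      Submodule.map (Module.evalEquiv ℂ (Fin m → ℂ)).toLinearMap (l i) := by
  intro i
  obtain ⟨p, rfl⟩ : ∃ p, m = p + 2 := ⟨m - 2, by omega⟩
  have h1 : ∀ j : Fin (p + 1), starMap (p+2) n l (2 - i + ((j : ℕ) : ZMod n)) =
      Submodule.dualAnnihilator (win (p+2) n l (i - ((j : ℕ) : ZMod n)) (p + 1)) := by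
    intro j
    show Submodule.dualAnnihilator (⨆ j' : Fin (p + 2 - 1),
        l (2 - (2 - i + ((j : ℕ) : ZMod n)) + ((j' : ℕ) : ZMod n))) = _
    congr 1
    refine iSup_congr fun j' => congrArg l ?_
    ring
  have h2 : starMap (p+2) n (starMap (p+2) n l) i
      = Submodule.dualAnnihilator (⨆ j : Fin (p + 1),
          Submodule.dualAnnihilator (win (p+2) n l (i - ((j : ℕ) : ZMod n)) (p + 1))) := by
    show Submodule.dualAnnihilator (⨆ j : Fin (p + 2 - 1),
        starMap (p+2) n l (2 - i + ((j : ℕ) : ZMod n))) = _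
    congr 1
    exact iSup_congr h1
  rw [h2, ← Subspace.dualAnnihilator_iInf_eq,
    Subspace.dualAnnihilator_dualAnnihilator_eq_map,
    key_inf n p l hdim hgen i p le_rfl, show p + 1 - p = 1 from by omega,
    Module.evalEquiv_toLinearMap]
  congr 1
  show (⨆ j : Fin 1, l (i + ((j : ℕ) : ZMod n))) = l i
  simp
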